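/- Define $\gamma(\eta) := 1/(e^{\eta/2} + e^{-\eta/2})$ for real $\eta$. For any $\eta_0 > 0$ there exists $\delta > 0$ such that for every real $\eta$ with $|\eta| \geq \eta_0$ one has $\int_0^1 e^{\eta x}\,dx < \gamma(\eta_0)\left(\int_{-1+\delta}^0 e^{\eta x}\,dx + \int_1^{2-\delta} e^{\eta x}\,dx\right).$ -/

import Mathlib

open Real

lemma integral_exp_mul' (η a b : ℝ) (hη : η ≠ 0) :
    ∫ x in a..b, Real.exp (η * x) = (Real.exp (η * b) - Real.exp (η * a)) / η := by
  have h : ∀ x ∈ Set.uIcc a b,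
      HasDerivAt (fun y => Real.exp (η * y) / η) (Real.exp (η * x)) x := by
    intro x _
    have h1 : HasDerivAt (fun y : ℝ => η * y) η x := by
      simpa using (hasDerivAt_id x).const_mul η
    have h2 : HasDerivAt (fun y => Real.exp (η * y)) (Real.exp (η * x) * η) x :=
      (Real.hasDerivAt_exp (η * x)).comp x h1
    have h3 := h2.div_const η
    simpa [mul_div_assoc, div_self hη] using h3
  have hint : IntervalIntegrable (fun x => Real.exp (η * x)) MeasureTheory.volume a b :=
    (Real.continuous_exp.comp (continuous_const.mul continuous_id)).intervalIntegrable a b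
  rw [intervalIntegral.integral_eq_sub_of_hasDerivAt h hint]
  ring

lemma aux_two_lt (x y : ℝ) (hx : 1 < x) (hxy : x * y = 1) : 2 < x + y := by
  nlinarith [mul_pos (sub_pos.mpr hx) (sub_pos.mpr hx)]

lemma aux_two_le (s t : ℝ) (hs : 0 < s) (hst : s * t = 1) : 2 ≤ s + t := by
  nlinarith [sq_nonneg (s - 1)]

lemma aux_sq (x y : ℝ) (hx : 1 < x) (hy : 0 < y) (hxy : x * y = 1) :
    x + y < x * x + y * y := by
  have h2 := aux_two_lt x y hx hxy
  nlinarith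

lemma aux_cosh (ea eb em en : ℝ) (h : ea ≤ em) (h1 : em * en = 1) (h2 : ea * eb = 1)
    (h3 : en * eb ≤ 1) : ea + eb ≤ em + en := by
  have hkey : em + en - (ea + eb) = (em - ea) * (1 - en * eb) := by
    linear_combination eb * h1 - en * h2
  nlinarith [mul_nonneg (sub_nonneg.mpr h) (sub_nonneg.mpr h3)]

lemma aux_l1 (g b s : ℝ) (hg1 : g ≤ 1) (hb1 : b ≤ 1) (hg : 0 < g) (hb : 0 < b)
    (hs : 1 ≤ s) : g * (b * (s - 1)) ≤ s - 1 := by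
  nlinarith [mul_le_mul_of_nonneg_right (show g * b ≤ 1 by nlinarith)
    (show (0:ℝ) ≤ s - 1 by linarith)]

lemma aux_l2 (g a t s E : ℝ) (hg1 : g ≤ 1) (hg : 0 < g) (ha : 0 < a)
    (ht : 0 ≤ 1 - t) (h1t : 1 - t ≤ s - 1) (haa : a * a ≤ E) (hE : 0 < E) :
    g * (a * a * (1 - t)) ≤ E * (s - 1) := by
  have p1 : a * a * (1 - t) ≤ E * (s - 1) :=
    mul_le_mul haa h1t ht hE.le
  nlinarith [mul_nonneg (show (0:ℝ) ≤ 1 - g by linarith)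
    (mul_nonneg (mul_nonneg ha.le ha.le) ht)]

lemma aux_l3 (E s : ℝ) (hE : 1 ≤ E) (hs : 1 ≤ s) :
    (s - 1) + E * (s - 1) ≤ 2 * E * (s - 1) := by
  nlinarith

lemma aux_l4 (E s e : ℝ) (hE : 0 < E) (h : s - 1 < e) :
    2 * E * (s - 1) < 2 * E * e := by
  nlinarith

lemma aux_gain (a e g c : ℝ) (he1 : 1 < e) (hea : e ≤ a) (hc : 0 < c)
    (hg : c ≤ g - 1) : c * (e - 1) ≤ (a - 1) * g - (a - 1) := by
  nlinarith [mul_nonneg (show (0:ℝ) ≤ a - 1 by linarith)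
      (show (0:ℝ) ≤ g - 1 - c by linarith),
    mul_nonneg (show (0:ℝ) ≤ a - e by linarith) hc.le]

set_option maxHeartbeats 1000000 in
/-- Lemma `integrals-dexponencials`: for any `η₀ > 0` there is `δ > 0` such that for every
`η` with `|η| ≥ η₀` the exponential-integral inequality holds, with
`γ(η₀) = 1/(e^{η₀/2} + e^{-η₀/2})`. -/
theorem stmt_2 (η₀ : ℝ) (hη₀ : 0 < η₀) :
    ∃ δ > 0, ∀ η : ℝ, η₀ ≤ |η| →
      (∫ x in (0:ℝ)..1, Real.exp (η * x)) <
        (1 / (Real.exp (η₀/2) + Real.exp (-(η₀/2)))) *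
          ((∫ x in (-1+δ:ℝ)..0, Real.exp (η * x)) +
            ∫ x in (1:ℝ)..(2-δ), Real.exp (η * x)) := by
  set A : ℝ := Real.exp (η₀/2) + Real.exp (-(η₀/2)) with hAdef
  set γ : ℝ := 1 / A with hγdef
  have hx1 : (1:ℝ) < Real.exp (η₀/2) := Real.one_lt_exp_iff.mpr (by linarith)
  have hxy : Real.exp (η₀/2) * Real.exp (-(η₀/2)) = 1 := by
    rw [← Real.exp_add]; simp
  have hA2 : (2:ℝ) < A := by
    rw [hAdef]; exact aux_two_lt _ _ hx1 hxy
  have hApos : (0:ℝ) < A := by linarith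
  have hγpos : (0:ℝ) < γ := by rw [hγdef]; positivity
  have hγA : γ * A = 1 := by rw [hγdef, one_div, inv_mul_cancel₀ (ne_of_gt hApos)]
  have hγ1 : γ ≤ 1 := by
    have h := mul_pos hγpos (show (0:ℝ) < A - 1 by linarith)
    linarith [hγA, h]
  have hxx : Real.exp η₀ = Real.exp (η₀/2) * Real.exp (η₀/2) := by
    rw [← Real.exp_add]; ring_nf
  have hyy : Real.exp (-η₀) = Real.exp (-(η₀/2)) * Real.exp (-(η₀/2)) := by
    rw [← Real.exp_add]; ring_nf
  have hlt : A < Real.exp η₀ + Real.exp (-η₀) := by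
    rw [hxx, hyy, hAdef]
    exact aux_sq _ _ hx1 (Real.exp_pos _) hxy
  set c : ℝ := γ * (Real.exp η₀ + Real.exp (-η₀)) - 1 with hcdef
  have hcpos : 0 < c := by
    have h := mul_lt_mul_of_pos_left hlt hγpos
    rw [hcdef]; linarith [hγA, h]
  set M : ℝ := max η₀ (2 * Real.log (1 + A)) with hMdef
  have hMη₀ : η₀ ≤ M := le_max_left _ _
  have hMlog : 2 * Real.log (1 + A) ≤ M := le_max_right _ _
  have hMpos : 0 < M := lt_of_lt_of_le hη₀ hMη₀
  set ε : ℝ := c * (Real.exp η₀ - 1) * Real.exp (-(2*M)) / 2 with hεdef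
  have heη₀ : 1 < Real.exp η₀ := Real.one_lt_exp_iff.mpr hη₀
  have hεpos : 0 < ε := by
    rw [hεdef]
    have h1 : 0 < Real.exp (-(2*M)) := Real.exp_pos _
    have h2 : 0 < Real.exp η₀ - 1 := by linarith
    positivity
  have hlogε : 0 < Real.log (1 + ε) := Real.log_pos (by linarith)
  set δ : ℝ := min (1/2 : ℝ) (Real.log (1 + ε) / (2*M)) with hδdef
  have hδpos : 0 < δ := lt_min (by norm_num) (div_pos hlogε (by linarith))
  have hδhalf : δ ≤ 1/2 := min_le_left _ _
  have hδlog : δ ≤ Real.log (1 + ε) / (2*M) := min_le_right _ _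
  clear_value δ ε M c γ A
  refine ⟨δ, hδpos, ?_⟩
  have key : ∀ μ : ℝ, η₀ ≤ μ →
      Real.exp μ - 1 < γ * ((1 - Real.exp (μ*(δ-1))) + (Real.exp (μ*(2-δ)) - Real.exp μ)) := by
    intro μ hμ
    have hμpos : 0 < μ := lt_of_lt_of_le hη₀ hμ
    by_cases hM : μ ≤ M
    · -- moderate μ
      set a : ℝ := Real.exp μ with hadef
      set b : ℝ := Real.exp (-μ) with hbdef
      set s : ℝ := Real.exp (μ*δ) with hsdef
      set t : ℝ := Real.exp (-(μ*δ)) with htdef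
      have E1 : Real.exp (μ*(δ-1)) = b * s := by
        rw [hbdef, hsdef, ← Real.exp_add]; ring_nf
      have E2 : Real.exp (μ*(2-δ)) = a * a * t := by
        rw [hadef, htdef, ← Real.exp_add, ← Real.exp_add]; ring_nf
      rw [E1, E2]
      have hab : a * b = 1 := by rw [hadef, hbdef, ← Real.exp_add]; simp
      have hst : s * t = 1 := by rw [hsdef, htdef, ← Real.exp_add]; simp
      have hμδ : 0 < μ * δ := mul_pos hμpos hδpos
      have hs1 : 1 ≤ s := Real.one_le_exp hμδ.le
      have ht1 : t ≤ 1 := Real.exp_le_one_iff.mpr (by linarith)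
      have hb1 : b ≤ 1 := Real.exp_le_one_iff.mpr (by linarith)
      have hspos : 0 < s := Real.exp_pos _
      have hapos : 0 < a := Real.exp_pos _
      have hbpos : 0 < b := Real.exp_pos _
      have h2st : 2 ≤ s + t := aux_two_le s t hspos hst
      have ha0 : Real.exp η₀ ≤ a := Real.exp_le_exp.mpr hμ
      have hyb : b * Real.exp (-η₀) ≤ 1 := by
        rw [hbdef, ← Real.exp_add]; exact Real.exp_le_one_iff.mpr (by linarith)
      have hee : Real.exp η₀ * Real.exp (-η₀) = 1 := by rw [← Real.exp_add]; simp
      have hcosh : Real.exp η₀ + Real.exp (-η₀) ≤ a + b :=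
        aux_cosh _ _ _ _ ha0 hab hee hyb
      have hgain : c ≤ γ * (a + b) - 1 := by
        have h := mul_le_mul_of_nonneg_left hcosh hγpos.le
        rw [hcdef]; linarith
      have hsε : s < 1 + ε := by
        have h1 : μ * δ ≤ M * δ := mul_le_mul_of_nonneg_right hM hδpos.le
        have h2 : M * δ ≤ M * (Real.log (1 + ε) / (2*M)) :=
          mul_le_mul_of_nonneg_left hδlog hMpos.le
        have h3 : M * (Real.log (1 + ε) / (2*M)) = Real.log (1 + ε) / 2 := by
          field_simp
        have h4 : μ * δ < Real.log (1 + ε) := by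
          rw [h3] at h2; linarith
        calc s < Real.exp (Real.log (1 + ε)) := Real.exp_lt_exp.mpr h4
          _ = 1 + ε := Real.exp_log (by linarith)
      have haa : a * a ≤ Real.exp (2*M) := by
        calc a * a = Real.exp (μ + μ) := by rw [Real.exp_add]
          _ ≤ Real.exp (2*M) := Real.exp_le_exp.mpr (by linarith)
      have hexpM1 : (1:ℝ) ≤ Real.exp (2*M) := Real.one_le_exp (by linarith)
      have hMM : Real.exp (2*M) * Real.exp (-(2*M)) = 1 := by rw [← Real.exp_add]; simp
      have identity : γ * ((1 - b*s) + (a*a*t - a))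
          = (a-1)*(γ*(a+b)) - γ*(b*(s-1)) - γ*(a*a*(1-t)) := by
        linear_combination (-γ) * hab
      have l1 : γ*(b*(s-1)) ≤ s - 1 := aux_l1 γ b s hγ1 hb1 hγpos hbpos hs1
      have l2 : γ*(a*a*(1-t)) ≤ Real.exp (2*M) * (s-1) :=
        aux_l2 γ a t s (Real.exp (2*M)) hγ1 hγpos hapos (by linarith) (by linarith)
          haa (Real.exp_pos _)
      have l3 : (s-1) + Real.exp (2*M)*(s-1) ≤ 2*Real.exp (2*M)*(s-1) :=
        aux_l3 _ _ hexpM1 hs1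
      have l4 : 2*Real.exp (2*M)*(s-1) < 2*Real.exp (2*M)*ε :=
        aux_l4 _ _ _ (Real.exp_pos _) (by linarith)
      have l5 : 2*Real.exp (2*M)*ε = c * (Real.exp η₀ - 1) := by
        rw [hεdef]
        linear_combination c * (Real.exp η₀ - 1) * hMM
      have gain2 : c * (Real.exp η₀ - 1) ≤ (a-1)*(γ*(a+b)) - (a-1) :=
        aux_gain a (Real.exp η₀) (γ*(a+b)) c heη₀ ha0 hcpos hgain
      linarith [identity, l1, l2, l3, l4, l5, gain2]
    · -- large μ
      push_neg at hM
      have hlog : Real.log (1 + A) ≤ μ * (1 - δ) := by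
        have e1 : 0 ≤ μ * (1/2 - δ) :=
          mul_nonneg hμpos.le (by linarith)
        nlinarith [e1, hMlog, hM]
      have hq : 1 + A ≤ Real.exp (μ*(1-δ)) := by
        calc 1 + A = Real.exp (Real.log (1 + A)) := (Real.exp_log (by linarith)).symm
          _ ≤ _ := Real.exp_le_exp.mpr hlog
      have hw : Real.exp (μ*(2-δ)) = Real.exp μ * Real.exp (μ*(1-δ)) := by
        rw [← Real.exp_add]; ring_nf
      have hp1 : Real.exp (μ*(δ-1)) < 1 := Real.exp_lt_one_iff.mpr
        (by nlinarith [mul_pos hμpos (show (0:ℝ) < 1 - δ by linarith)])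
      have h5 : 1 ≤ γ * (Real.exp (μ*(1-δ)) - 1) := by
        have h := mul_le_mul_of_nonneg_left hq hγpos.le
        nlinarith [hγA, h]
      have H1 := mul_le_mul_of_nonneg_left h5 (Real.exp_pos μ).le
      have H2 : 0 < γ * (1 - Real.exp (μ*(δ-1))) :=
        mul_pos hγpos (sub_pos.mpr hp1)
      have hw' : γ * Real.exp (μ*(2-δ)) = γ * (Real.exp μ * Real.exp (μ*(1-δ))) := by
        rw [hw]
      nlinarith [H1, H2, hw', Real.exp_pos μ]
  intro η hη
  rcases le_abs.mp hη with h | h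
  · have hηpos : 0 < η := lt_of_lt_of_le hη₀ h
    have hηne : η ≠ 0 := ne_of_gt hηpos
    rw [integral_exp_mul' η 0 1 hηne, integral_exp_mul' η (-1+δ) 0 hηne,
      integral_exp_mul' η 1 (2-δ) hηne]
    simp only [mul_one, mul_zero, Real.exp_zero]
    rw [show η * (-1+δ) = η * (δ-1) by ring]
    rw [← add_div, ← mul_div_assoc, div_lt_div_iff_of_pos_right hηpos]
    exact key η h
  · have hημpos : 0 < -η := lt_of_lt_of_le hη₀ h
    have hηneg : η < 0 := by linarith
    have hηne : η ≠ 0 := ne_of_lt hηneg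
    rw [integral_exp_mul' η 0 1 hηne, integral_exp_mul' η (-1+δ) 0 hηne,
      integral_exp_mul' η 1 (2-δ) hηne]
    simp only [mul_one, mul_zero, Real.exp_zero]
    rw [show η * (-1+δ) = η * (δ-1) by ring]
    rw [← add_div, ← mul_div_assoc, div_lt_div_right_of_neg hηneg]
    have hk := key (-η) h
    rw [show (-η) * (δ-1) = η * (1-δ) by ring, show (-η) * (2-δ) = η * (δ-2) by ring] at hk
    set a : ℝ := Real.exp (-η) with hadef
    set b : ℝ := Real.exp η with hbdef
    set p : ℝ := Real.exp (η*(1-δ)) with hpdef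
    set r : ℝ := Real.exp (η*(δ-2)) with hrdef
    set q : ℝ := Real.exp (η*(δ-1)) with hqdef
    set w : ℝ := Real.exp (η*(2-δ)) with hwdef
    have hab : a * b = 1 := by rw [hadef, hbdef, ← Real.exp_add]; simp
    have hpb : p * b = w := by rw [hpdef, hbdef, hwdef, ← Real.exp_add]; ring_nf
    have hrb : r * b = q := by rw [hrdef, hbdef, hqdef, ← Real.exp_add]; ring_nf
    have hbpos : 0 < b := Real.exp_pos _
    have h2 := mul_lt_mul_of_pos_right hk hbpos
    have h3 : (a - 1) * b = 1 - b := by linear_combination hab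
    have h4 : (γ * ((1 - p) + (r - a))) * b = -(γ * ((1 - q) + (w - b))) := by
      linear_combination (-γ) * hpb + γ * hrb + (-γ) * hab
    linarith [h2, h3, h4]
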